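/- For all n ≥ 1, Σ_{m ≤ x} τ_k(m)^2 / m ≍ (log x)^{k^2} as x → ∞; more precisely there exist constants c1, c2 > 0 depending only on k such that c1 (log x)^{k^2} ≤ Σ_{m ≤ x, m odd} τ_k(m)^2/m ≤ Σ_{m ≤ x} τ_k(m)^2/m ≤ c2 (log x)^{k^2} for all x ≥ 2. -/

import Mathlib

open Finset

/-- The `k`-fold divisor function `τ_k(m)`: the number of ordered factorizations of `m`
into `k` positive-integer factors. -/
def tauk (k m : ℕ) : ℕ :=
  ((Fintype.piFinset fun _ : Fin k => Finset.range (m + 1)).filter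
    fun f => ∏ i, f i = m).card

open ArithmeticFunction
open scoped ArithmeticFunction.zeta

/-- the finset of ordered factorizations -/
def Fset (k m : ℕ) : Finset (Fin k → ℕ) :=
  (Fintype.piFinset fun _ : Fin k => Finset.range (m + 1)).filter fun f => ∏ i, f i = m

lemma tauk_eq_card (k m : ℕ) : tauk k m = (Fset k m).card := rfl

lemma mem_Fset {k m : ℕ} (hm : 1 ≤ m) {f : Fin k → ℕ} :
    f ∈ Fset k m ↔ ∏ i, f i = m := by
  unfold Fset
  rw [Finset.mem_filter, Fintype.mem_piFinset]
  constructor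
  · exact fun h => h.2
  · intro h
    refine ⟨fun i => ?_, h⟩
    rw [Finset.mem_range, Nat.lt_succ_iff]
    exact Nat.le_of_dvd hm (h ▸ Finset.dvd_prod_of_mem f (mem_univ i))

lemma Fset_pos {k m : ℕ} (hm : 1 ≤ m) {f : Fin k → ℕ} (hf : f ∈ Fset k m) (i : Fin k) :
    1 ≤ f i := by
  rw [mem_Fset hm] at hf
  rcases Nat.eq_zero_or_pos (f i) with h | h
  · exfalso
    have : ∏ j, f j = 0 := Finset.prod_eq_zero (mem_univ i) h
    omega
  · exact h

lemma tauk_zero_left (m : ℕ) (hm : 1 ≤ m) : tauk 0 m = if m = 1 then 1 else 0 := by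
  rw [tauk_eq_card]
  rcases eq_or_ne m 1 with rfl | h
  · rw [if_pos rfl]
    have : Fset 0 1 = {![]} := by
      ext f
      rw [mem_Fset le_rfl]
      simp [Matrix.empty_eq]
    simp [this]
  · rw [if_neg h]
    rw [Finset.card_eq_zero]
    ext f
    simp only [Finset.notMem_empty, iff_false]
    rw [mem_Fset hm]
    simpa using h ∘ Eq.symm

lemma tauk_succ (k m : ℕ) (hm : 1 ≤ m) :
    tauk (k + 1) m = ∑ x ∈ m.divisorsAntidiagonal, tauk k x.1 := by
  rw [tauk_eq_card]
  have hmem : ∀ f ∈ Fset (k + 1) m,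
      ((∏ i : Fin k, f i.castSucc, f (Fin.last k)) : ℕ × ℕ) ∈ m.divisorsAntidiagonal := by
    intro f hf
    rw [mem_Fset hm] at hf
    rw [Nat.mem_divisorsAntidiagonal]
    exact ⟨by rw [← hf, Fin.prod_univ_castSucc], by omega⟩
  rw [Finset.card_eq_sum_card_fiberwise hmem]
  refine Finset.sum_congr rfl fun x hx => ?_
  rw [Nat.mem_divisorsAntidiagonal] at hx
  obtain ⟨hx1, hx2⟩ := hx
  have ha : 1 ≤ x.1 := by
    rcases Nat.eq_zero_or_pos x.1 with h | h
    · exfalso; rw [h, zero_mul] at hx1; omega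
    · exact h
  rw [tauk_eq_card]
  refine Finset.card_bij' (fun f _ => fun i : Fin k => f i.castSucc)
    (fun g _ => Fin.snoc g x.2) ?hi ?hj ?li ?ri
  case hi =>
    intro f hf
    rw [Finset.mem_filter] at hf
    obtain ⟨hf1, hf2⟩ := hf
    rw [mem_Fset ha]
    exact (Prod.mk.injEq _ _ _ _ ▸ hf2).1
  case hj =>
    intro g hg
    rw [mem_Fset ha] at hg
    rw [Finset.mem_filter]
    constructor
    · rw [mem_Fset hm, Fin.prod_univ_castSucc]
      simp only [Fin.snoc_castSucc, Fin.snoc_last]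
      rw [hg, hx1]
    · simp only [Fin.snoc_castSucc, Fin.snoc_last, hg]
  case li =>
    intro f hf
    rw [Finset.mem_filter] at hf
    have h2 := (Prod.mk.injEq _ _ _ _ ▸ hf.2).2
    funext i
    induction i using Fin.lastCases with
    | last => simp [Fin.snoc_last, h2]
    | cast i => simp [Fin.snoc_castSucc]
  case ri =>
    intro g hg
    funext i
    simp [Fin.snoc_castSucc]

lemma zeta_pow_apply (k : ℕ) {m : ℕ} (hm : m ≠ 0) :
    ((ζ : ArithmeticFunction ℕ) ^ k) m = tauk k m := by
  induction k generalizing m with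
  | zero =>
    rw [pow_zero, ArithmeticFunction.one_apply, tauk_zero_left m (by omega)]
  | succ k ih =>
    rw [pow_succ, ArithmeticFunction.mul_apply, tauk_succ k m (by omega)]
    refine Finset.sum_congr rfl fun x hx => ?_
    rw [Nat.mem_divisorsAntidiagonal] at hx
    have hx2 : x.2 ≠ 0 := by rintro h; rw [h, mul_zero] at hx; omega
    have hx1 : x.1 ≠ 0 := by rintro h; rw [h, zero_mul] at hx; omega
    rw [ih hx1, zeta_apply, if_neg hx2, mul_one]

lemma isMult_zeta_pow (k : ℕ) : ((ζ : ArithmeticFunction ℕ) ^ k).IsMultiplicative := by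
  induction k with
  | zero => rw [pow_zero]; exact ArithmeticFunction.isMultiplicative_one
  | succ k ih => rw [pow_succ]; exact ih.mul isMultiplicative_zeta

lemma zeta_pow_prime_pow (k : ℕ) {p : ℕ} (hp : p.Prime) (e : ℕ) :
    ((ζ : ArithmeticFunction ℕ) ^ (k + 1)) (p ^ e) = (e + k).choose e := by
  induction k generalizing e with
  | zero =>
    rw [pow_one, zeta_apply, if_neg (pow_ne_zero e hp.pos.ne')]
    simp
  | succ k ih =>
    rw [pow_succ, ArithmeticFunction.mul_zeta_apply,
      Nat.divisors_prime_pow hp, Finset.sum_map]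
    simp only [Function.Embedding.coeFn_mk]
    have : ∀ j ∈ Finset.range (e + 1), ((ζ : ArithmeticFunction ℕ) ^ (k+1)) (p ^ j)
        = (j + k).choose k := by
      intro j _
      rw [ih j, Nat.choose_symm_add]
    rw [Finset.sum_congr rfl this]
    have h2 : ∑ j ∈ Finset.range (e + 1), (j + k).choose k
        = ∑ m ∈ Finset.Icc k (e + k), m.choose k := by
      rw [Nat.range_eq_Icc_zero_sub_one (e+1) (by omega), Nat.add_sub_cancel,
        show Finset.Icc k (e+k) = Finset.Icc (k+0) (k+e) by rw [add_zero, add_comm e k],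
        ← map_add_left_Icc 0 e k, Finset.sum_map]
      exact Finset.sum_congr rfl fun j _ => by
        simp [addLeftEmbedding_apply, add_comm]
    rw [h2, Nat.sum_Icc_choose]
    exact Nat.choose_symm_of_eq_add (by omega)


lemma choose_prod_real (s a : ℕ) :
    (((s + a).choose a : ℝ)) = ∏ i ∈ range a, ((s : ℝ) + 1 + i) / (i + 1) := by
  induction a with
  | zero => simp
  | succ a ih =>
    rw [Finset.prod_range_succ, ← ih]
    have h := Nat.add_one_mul_choose_eq (s + a) a
    have h' : ((s + a + 1 : ℕ) : ℝ) * ((s + a).choose a : ℝ)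
        = ((s + a + 1).choose (a + 1) : ℝ) * ((a + 1 : ℕ) : ℝ) := by exact_mod_cast h
    push_cast at h'
    rw [show s + (a + 1) = s + a + 1 by omega]
    have ha : ((a : ℝ) + 1) ≠ 0 := by positivity
    field_simp
    nlinarith [h']

lemma sq_choose_le (k a : ℕ) (hk : 1 ≤ k) :
    ((a + k - 1).choose a) ^ 2 ≤ (a + k ^ 2 - 1).choose a := by
  obtain ⟨s, rfl⟩ : ∃ s, k = s + 1 := ⟨k - 1, by omega⟩
  rw [show a + (s + 1) - 1 = s + a by omega,
    show a + (s + 1) ^ 2 - 1 = (s ^ 2 + 2 * s) + a by ring_nf; omega]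
  have : (((s + a).choose a : ℝ)) ^ 2 ≤ (((s ^ 2 + 2 * s + a).choose a : ℝ)) := by
    rw [choose_prod_real, choose_prod_real, ← Finset.prod_pow]
    apply Finset.prod_le_prod
    · intro i _; positivity
    · intro i _
      rw [div_pow, div_le_div_iff₀ (by positivity) (by positivity)]
      push_cast
      nlinarith [mul_nonneg (mul_nonneg (show (0:ℝ) ≤ (i:ℝ) by positivity)
        (show (0:ℝ) ≤ (i:ℝ) + 1 by positivity)) (sq_nonneg (s:ℝ))]
  exact_mod_cast this

lemma choose_two_mul_le (k e : ℕ) (hk : 1 ≤ k) :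
    (2 * e + k - 1).choose (2 * e) ≤ ((e + k - 1).choose e) ^ 2 := by
  obtain ⟨s, rfl⟩ : ∃ s, k = s + 1 := ⟨k - 1, by omega⟩
  rw [show 2 * e + (s + 1) - 1 = s + 2 * e by omega, show e + (s + 1) - 1 = s + e by omega]
  have : (((s + 2 * e).choose (2 * e) : ℝ)) ≤ (((s + e).choose e : ℝ)) ^ 2 := by
    rw [choose_prod_real, choose_prod_real, two_mul, Finset.prod_range_add, sq]
    apply mul_le_mul le_rfl ?h2 ?pos1 ?pos2
    case h2 =>
      apply Finset.prod_le_prod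
      · intro i _; positivity
      · intro i _
        rw [div_le_div_iff₀ (by positivity) (by positivity)]
        push_cast
        nlinarith [mul_nonneg (show (0:ℝ) ≤ (e:ℝ) by positivity) (show (0:ℝ) ≤ (s:ℝ) by positivity)]
    case pos1 =>
      apply Finset.prod_nonneg; intro i _; positivity
    case pos2 =>
      apply Finset.prod_nonneg; intro i _; positivity
  exact_mod_cast this

lemma zeta_pow_prime_pow' {k : ℕ} (hk : 1 ≤ k) {p : ℕ} (hp : p.Prime) (e : ℕ) :
    ((ζ : ArithmeticFunction ℕ) ^ k) (p ^ e) = (e + k - 1).choose e := by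
  obtain ⟨s, rfl⟩ : ∃ s, k = s + 1 := ⟨k - 1, by omega⟩
  rw [zeta_pow_prime_pow s hp e, show e + (s + 1) - 1 = e + s by omega]

lemma mult_mono {f g : ArithmeticFunction ℕ} (hf : f.IsMultiplicative) (hg : g.IsMultiplicative)
    (hle : ∀ p e : ℕ, p.Prime → 1 ≤ e → f (p ^ e) ≤ g (p ^ e)) {n : ℕ} (hn : n ≠ 0) :
    f n ≤ g n := by
  rw [hf.multiplicative_factorization f hn, hg.multiplicative_factorization g hn]
  rw [Finsupp.prod, Finsupp.prod]
  apply Finset.prod_le_prod'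
  intro p hp
  have hp' : p.Prime := Nat.prime_of_mem_primeFactors (by rwa [← Nat.support_factorization])
  have hpos : 1 ≤ n.factorization p := Nat.one_le_iff_ne_zero.mpr (Finsupp.mem_support_iff.mp hp)
  exact hle p _ hp' hpos

/-- the multiplicative function `μ²(a) K^{ω(a)}` -/
def gfun (K : ℕ) : ArithmeticFunction ℕ :=
  ⟨fun a => if Squarefree a then K ^ a.primeFactors.card else 0, by
    simp [not_squarefree_zero]⟩

/-- `τ_K` supported on perfect squares -/
def hfun (K : ℕ) : ArithmeticFunction ℕ :=
  ⟨fun b => if IsSquare b then ((ζ : ArithmeticFunction ℕ) ^ K) b else 0, by simp⟩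

lemma gfun_apply (K a : ℕ) :
    gfun K a = if Squarefree a then K ^ a.primeFactors.card else 0 := rfl

lemma hfun_apply (K b : ℕ) :
    hfun K b = if IsSquare b then ((ζ : ArithmeticFunction ℕ) ^ K) b else 0 := rfl

lemma isMult_gfun (K : ℕ) : (gfun K).IsMultiplicative := by
  constructor
  · rw [gfun_apply, if_pos squarefree_one]
    simp
  · intro m n h
    rcases eq_or_ne m 0 with rfl | hm0
    · rw [Nat.coprime_zero_left] at h
      subst h
      simp [gfun_apply, not_squarefree_zero]
    rcases eq_or_ne n 0 with rfl | hn0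
    · rw [Nat.coprime_zero_right] at h
      subst h
      simp [gfun_apply, not_squarefree_zero]
    by_cases hsf : Squarefree (m * n)
    · obtain ⟨hm, hn⟩ := (Nat.squarefree_mul h).mp hsf
      rw [gfun_apply, gfun_apply, gfun_apply, if_pos hsf, if_pos hm, if_pos hn,
        Nat.primeFactors_mul hm0 hn0,
        Finset.card_union_of_disjoint (Nat.Coprime.disjoint_primeFactors h), pow_add]
    · rw [gfun_apply, if_neg hsf]
      have := (Nat.squarefree_mul h).not.mp hsf
      rw [not_and_or] at this
      rcases this with hm | hn
      · rw [gfun_apply, if_neg hm, zero_mul]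
      · rw [gfun_apply (K := K) n, if_neg hn, mul_zero]

lemma isSquare_mul_coprime {m n : ℕ} (h : m.Coprime n) :
    IsSquare (m * n) ↔ IsSquare m ∧ IsSquare n := by
  constructor
  · rintro ⟨c, hc⟩
    have hsq : m * n = c ^ 2 := by rw [hc, sq]
    have hgcd : IsUnit (GCDMonoid.gcd m n) := by
      rw [Nat.isUnit_iff]
      exact h
    constructor
    · obtain ⟨d, hd⟩ := exists_eq_pow_of_mul_eq_pow hgcd hsq
      exact ⟨d, by rw [hd, sq]⟩
    · have hgcd' : IsUnit (GCDMonoid.gcd n m) := by rw [Nat.isUnit_iff]; exact h.symm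
      obtain ⟨d, hd⟩ := exists_eq_pow_of_mul_eq_pow hgcd' (by rwa [mul_comm])
      exact ⟨d, by rw [hd, sq]⟩
  · rintro ⟨hm, hn⟩
    exact hm.mul hn

lemma isMult_hfun (K : ℕ) : (hfun K).IsMultiplicative := by
  constructor
  · rw [hfun_apply, if_pos IsSquare.one, (isMult_zeta_pow K).map_one]
  · intro m n h
    by_cases hs : IsSquare (m * n)
    · obtain ⟨hm, hn⟩ := (isSquare_mul_coprime h).mp hs
      rw [hfun_apply, hfun_apply, hfun_apply, if_pos hs, if_pos hm, if_pos hn,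
        (isMult_zeta_pow K).map_mul_of_coprime h]
    · rw [hfun_apply, if_neg hs]
      have := (isSquare_mul_coprime h).not.mp hs
      rw [not_and_or] at this
      rcases this with hm | hn
      · rw [hfun_apply, if_neg hm, zero_mul]
      · rw [hfun_apply (K := K) n, if_neg hn, mul_zero]

def sqT (k : ℕ) : ArithmeticFunction ℕ :=
  ⟨fun n => (((ζ : ArithmeticFunction ℕ) ^ k) n) ^ 2, by simp⟩

lemma sqT_apply (k n : ℕ) : sqT k n = (((ζ : ArithmeticFunction ℕ) ^ k) n) ^ 2 := rfl

lemma isMult_sqT (k : ℕ) : (sqT k).IsMultiplicative := by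
  constructor
  · rw [sqT_apply, (isMult_zeta_pow k).map_one, one_pow]
  · intro m n h
    rw [sqT_apply, sqT_apply, sqT_apply, (isMult_zeta_pow k).map_mul_of_coprime h, mul_pow]

def T2 (K : ℕ) : ArithmeticFunction ℕ :=
  ⟨fun s => ((ζ : ArithmeticFunction ℕ) ^ K) (s ^ 2), by simp⟩

lemma T2_apply (K s : ℕ) : T2 K s = ((ζ : ArithmeticFunction ℕ) ^ K) (s ^ 2) := rfl

lemma isMult_T2 (K : ℕ) : (T2 K).IsMultiplicative := by
  constructor
  · rw [T2_apply, one_pow, (isMult_zeta_pow K).map_one]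
  · intro m n h
    rw [T2_apply, T2_apply, T2_apply, mul_pow,
      (isMult_zeta_pow K).map_mul_of_coprime (Nat.Coprime.pow 2 2 h)]

lemma choose_succ_le (K e : ℕ) (hK : 1 ≤ K) (he : 1 ≤ e) :
    (e + K - 1).choose e ≤ K * ((e - 1 + K - 1).choose (e - 1)) := by
  obtain ⟨f, rfl⟩ : ∃ f, e = f + 1 := ⟨e - 1, by omega⟩
  obtain ⟨t, rfl⟩ : ∃ t, K = t + 1 := ⟨K - 1, by omega⟩
  rw [show f + 1 + (t + 1) - 1 = f + t + 1 by omega,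
    show f + 1 - 1 + (t + 1) - 1 = f + t by omega, Nat.add_sub_cancel]
  have h := Nat.add_one_mul_choose_eq (f + t) f
  apply Nat.le_of_mul_le_mul_right _ (show 0 < f + 1 by omega)
  calc (f + t + 1).choose (f + 1) * (f + 1) = (f + t + 1) * (f + t).choose f := h.symm
    _ ≤ ((t + 1) * (f + 1)) * (f + t).choose f := by
        apply Nat.mul_le_mul_right
        nlinarith
    _ = (t + 1) * (f + t).choose f * (f + 1) := by ring

lemma pointwise_sq {k m : ℕ} (hk : 1 ≤ k) (hm : m ≠ 0) :
    (((ζ : ArithmeticFunction ℕ) ^ k) m) ^ 2 ≤ ((ζ : ArithmeticFunction ℕ) ^ (k ^ 2)) m := by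
  have hk2 : 1 ≤ k ^ 2 := Nat.one_le_pow _ _ hk
  have := mult_mono (isMult_sqT k) (isMult_zeta_pow (k ^ 2)) ?_ hm
  · exact this
  intro p e hp he
  rw [sqT_apply, zeta_pow_prime_pow' hk hp, zeta_pow_prime_pow' hk2 hp]
  exact sq_choose_le k e hk

lemma pointwise_T2 {K s : ℕ} (hK : 1 ≤ K) (hs : s ≠ 0) :
    ((ζ : ArithmeticFunction ℕ) ^ K) (s ^ 2) ≤ (((ζ : ArithmeticFunction ℕ) ^ K) s) ^ 2 := by
  have := mult_mono (isMult_T2 K) (isMult_sqT K) ?_ hs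
  · exact this
  intro p e hp he
  rw [T2_apply, sqT_apply, ← pow_mul, mul_comm e 2, zeta_pow_prime_pow' hK hp,
    zeta_pow_prime_pow' hK hp]
  exact choose_two_mul_le K e hK

lemma pointwise_conv {K m : ℕ} (hK : 1 ≤ K) (hm : m ≠ 0) :
    ((ζ : ArithmeticFunction ℕ) ^ K) m ≤ (gfun K * hfun K) m := by
  have := mult_mono (isMult_zeta_pow K) ((isMult_gfun K).mul (isMult_hfun K)) ?_ hm
  · exact this
  intro p e hp he
  rw [ArithmeticFunction.mul_apply]
  rcases Nat.even_or_odd e with hev | hod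
  · obtain ⟨t, rfl⟩ := hev
    have hmem : ((1 : ℕ), p ^ (t + t)) ∈ (p ^ (t + t)).divisorsAntidiagonal := by
      rw [Nat.mem_divisorsAntidiagonal]
      exact ⟨one_mul _, pow_ne_zero _ hp.pos.ne'⟩
    have hval : ((ζ : ArithmeticFunction ℕ) ^ K) (p ^ (t + t)) = gfun K 1 * hfun K (p ^ (t + t)) := by
      rw [gfun_apply, if_pos squarefree_one, Nat.primeFactors_one, Finset.card_empty,
        pow_zero, one_mul, hfun_apply, if_pos ⟨p ^ t, by rw [← pow_add]⟩]
    rw [hval]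
    exact Finset.single_le_sum (f := fun x => gfun K x.1 * hfun K x.2)
      (fun i _ => Nat.zero_le _) hmem
  · obtain ⟨t, rfl⟩ := hod
    have hppos : p ^ (2 * t + 1) ≠ 0 := pow_ne_zero _ hp.pos.ne'
    have hmem : ((p : ℕ), p ^ (2 * t)) ∈ (p ^ (2 * t + 1)).divisorsAntidiagonal := by
      rw [Nat.mem_divisorsAntidiagonal]
      exact ⟨by rw [← pow_succ'], hppos⟩
    have hval : gfun K p * hfun K (p ^ (2 * t)) = K * ((ζ : ArithmeticFunction ℕ) ^ K) (p ^ (2 * t)) := by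
      rw [gfun_apply, if_pos hp.squarefree, Nat.Prime.primeFactors hp, Finset.card_singleton,
        pow_one, hfun_apply, if_pos ⟨p ^ t, by rw [← pow_add, two_mul]⟩]
    have hle : ((ζ : ArithmeticFunction ℕ) ^ K) (p ^ (2 * t + 1))
        ≤ gfun K p * hfun K (p ^ (2 * t)) := by
      rw [hval, zeta_pow_prime_pow' hK hp, zeta_pow_prime_pow' hK hp]
      have := choose_succ_le K (2 * t + 1) hK (by omega)
      rw [show 2 * t + 1 - 1 = 2 * t by omega] at this
      exact this
    exact hle.trans (Finset.single_le_sum (f := fun x => gfun K x.1 * hfun K x.2)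
      (fun i _ => Nat.zero_le _) hmem)

lemma pointwise_g {k a : ℕ} (hk : 1 ≤ k) (ha : a ≠ 0) :
    gfun (k ^ 2) a ≤ (((ζ : ArithmeticFunction ℕ) ^ k) a) ^ 2 := by
  have := mult_mono (isMult_gfun (k ^ 2)) (isMult_sqT k) ?_ ha
  · exact this
  intro p e hp he
  rcases eq_or_ne e 1 with rfl | he1
  · rw [pow_one, gfun_apply, if_pos hp.squarefree, Nat.Prime.primeFactors hp,
      Finset.card_singleton, pow_one, sqT_apply, ← pow_one p, zeta_pow_prime_pow' hk hp,
      show 1 + k - 1 = k by omega, Nat.choose_one_right]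
  · rw [gfun_apply, if_neg]
    · exact Nat.zero_le _
    rw [Nat.squarefree_pow_iff hp.ne_one (by omega)]
    rintro ⟨-, h⟩
    exact he1 h


/-! ### Real sum lemmas -/

lemma tauk_mul_eq_sum (J m c : ℕ) (hm : 1 ≤ m) :
    (tauk J m : ℝ) * ((m : ℝ)⁻¹ ^ c) = ∑ f ∈ Fset J m, ∏ i, ((f i : ℝ)⁻¹ ^ c) := by
  have : ∀ f ∈ Fset J m, ∏ i, ((f i : ℝ)⁻¹ ^ c) = (m : ℝ)⁻¹ ^ c := by
    intro f hf
    have hprod : ∏ i, f i = m := (mem_Fset hm).mp hf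
    rw [Finset.prod_pow]
    congr 1
    rw [← hprod]
    push_cast
    simp
  rw [Finset.sum_congr rfl this, Finset.sum_const, tauk_eq_card, nsmul_eq_mul]

lemma sum_tauk_le (J N c : ℕ) :
    ∑ m ∈ Finset.Icc 1 N, (tauk J m : ℝ) * ((m : ℝ)⁻¹ ^ c)
      ≤ (∑ n ∈ Finset.Icc 1 N, ((n : ℝ)⁻¹ ^ c)) ^ J := by
  -- RHS as sum over tuples
  have hRHS : (∑ n ∈ Finset.Icc 1 N, ((n : ℝ)⁻¹ ^ c)) ^ J
      = ∑ f ∈ Fintype.piFinset (fun _ : Fin J => Finset.Icc 1 N), ∏ i, ((f i : ℝ)⁻¹ ^ c) := by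
    calc (∑ n ∈ Finset.Icc 1 N, ((n : ℝ)⁻¹ ^ c)) ^ J
        = ∏ _i : Fin J, ∑ n ∈ Finset.Icc 1 N, ((n : ℝ)⁻¹ ^ c) := by
          rw [Finset.prod_const, Finset.card_univ, Fintype.card_fin]
      _ = _ := Finset.prod_univ_sum _ _
  have hdisj : (↑(Finset.Icc 1 N) : Set ℕ).PairwiseDisjoint (fun m => Fset J m) := by
    intro a ha b hb hab
    rw [Function.onFun, Finset.disjoint_left]
    intro f hfa hfb
    rw [Finset.mem_coe, Finset.mem_Icc] at ha hb
    rw [mem_Fset (by omega)] at hfa hfb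
    omega
  have hsub : (Finset.Icc 1 N).biUnion (fun m => Fset J m)
      ⊆ Fintype.piFinset (fun _ : Fin J => Finset.Icc 1 N) := by
    intro f hf
    rw [Finset.mem_biUnion] at hf
    obtain ⟨m, hm, hfm⟩ := hf
    rw [Finset.mem_Icc] at hm
    rw [Fintype.mem_piFinset]
    intro i
    rw [Finset.mem_Icc]
    have h1 : 1 ≤ f i := Fset_pos (by omega) hfm i
    have h2 : f i ≤ m := by
      have := (Finset.mem_filter.mp hfm).1
      rw [Fintype.mem_piFinset] at this
      have := this i
      rw [Finset.mem_range] at this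
      omega
    omega
  calc ∑ m ∈ Finset.Icc 1 N, (tauk J m : ℝ) * ((m : ℝ)⁻¹ ^ c)
      = ∑ m ∈ Finset.Icc 1 N, ∑ f ∈ Fset J m, ∏ i, ((f i : ℝ)⁻¹ ^ c) := by
        refine Finset.sum_congr rfl fun m hm => ?_
        rw [Finset.mem_Icc] at hm
        exact tauk_mul_eq_sum J m c (by omega)
    _ = ∑ f ∈ (Finset.Icc 1 N).biUnion (fun m => Fset J m), ∏ i, ((f i : ℝ)⁻¹ ^ c) :=
        (Finset.sum_biUnion hdisj).symm
    _ ≤ ∑ f ∈ Fintype.piFinset (fun _ : Fin J => Finset.Icc 1 N), ∏ i, ((f i : ℝ)⁻¹ ^ c) := by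
        apply Finset.sum_le_sum_of_subset_of_nonneg hsub
        intro f _ _
        positivity
    _ = _ := hRHS.symm

lemma sum_tauk_ge (Kp N N' : ℕ) (hN' : 1 ≤ N') (h : N' ^ Kp ≤ N) :
    (∑ n ∈ (Finset.Icc 1 N').filter (fun n => Odd n), (n : ℝ)⁻¹) ^ Kp
      ≤ ∑ m ∈ (Finset.Icc 1 N).filter (fun m => Odd m), (tauk Kp m : ℝ) * (m : ℝ)⁻¹ := by
  have hLHS : (∑ n ∈ (Finset.Icc 1 N').filter (fun n => Odd n), (n : ℝ)⁻¹) ^ Kp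
      = ∑ f ∈ Fintype.piFinset (fun _ : Fin Kp => (Finset.Icc 1 N').filter (fun n => Odd n)),
          ∏ i, ((f i : ℝ))⁻¹ := by
    calc (∑ n ∈ (Finset.Icc 1 N').filter (fun n => Odd n), (n : ℝ)⁻¹) ^ Kp
        = ∏ _i : Fin Kp, ∑ n ∈ (Finset.Icc 1 N').filter (fun n => Odd n), (n : ℝ)⁻¹ := by
          rw [Finset.prod_const, Finset.card_univ, Fintype.card_fin]
      _ = _ := Finset.prod_univ_sum _ _
  have hdisj : (↑((Finset.Icc 1 N).filter (fun m => Odd m)) : Set ℕ).PairwiseDisjoint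
      (fun m => Fset Kp m) := by
    intro a ha b hb hab
    rw [Function.onFun, Finset.disjoint_left]
    intro f hfa hfb
    rw [Finset.mem_coe, Finset.mem_filter, Finset.mem_Icc] at ha hb
    rw [mem_Fset (by omega)] at hfa hfb
    omega
  have hsub : Fintype.piFinset (fun _ : Fin Kp => (Finset.Icc 1 N').filter (fun n => Odd n))
      ⊆ ((Finset.Icc 1 N).filter (fun m => Odd m)).biUnion (fun m => Fset Kp m) := by
    intro f hf
    rw [Fintype.mem_piFinset] at hf
    have hf' : ∀ i, 1 ≤ f i ∧ f i ≤ N' ∧ Odd (f i) := by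
      intro i
      have := hf i
      rw [Finset.mem_filter, Finset.mem_Icc] at this
      tauto
    set m := ∏ i, f i with hm
    have hm1 : 1 ≤ m := Finset.one_le_prod' fun i _ => (hf' i).1
    have hmodd : Odd m := by
      apply Finset.prod_induction f Odd (fun a b => Odd.mul) odd_one
      intro i _
      exact (hf' i).2.2
    have hmN : m ≤ N := by
      calc m ≤ ∏ _i : Fin Kp, N' := Finset.prod_le_prod' fun i _ => (hf' i).2.1
        _ = N' ^ Kp := by rw [Finset.prod_const, Finset.card_univ, Fintype.card_fin]
        _ ≤ N := h
    rw [Finset.mem_biUnion]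
    exact ⟨m, by rw [Finset.mem_filter, Finset.mem_Icc]; exact ⟨⟨hm1, hmN⟩, hmodd⟩,
      (mem_Fset hm1).mpr rfl⟩
  calc (∑ n ∈ (Finset.Icc 1 N').filter (fun n => Odd n), (n : ℝ)⁻¹) ^ Kp
      = ∑ f ∈ Fintype.piFinset (fun _ : Fin Kp => (Finset.Icc 1 N').filter (fun n => Odd n)),
          ∏ i, ((f i : ℝ))⁻¹ := hLHS
    _ ≤ ∑ f ∈ ((Finset.Icc 1 N).filter (fun m => Odd m)).biUnion (fun m => Fset Kp m),
          ∏ i, ((f i : ℝ))⁻¹ := by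
        apply Finset.sum_le_sum_of_subset_of_nonneg hsub
        intro f _ _
        positivity
    _ = ∑ m ∈ (Finset.Icc 1 N).filter (fun m => Odd m), ∑ f ∈ Fset Kp m,
          ∏ i, ((f i : ℝ))⁻¹ := Finset.sum_biUnion hdisj
    _ = ∑ m ∈ (Finset.Icc 1 N).filter (fun m => Odd m), (tauk Kp m : ℝ) * (m : ℝ)⁻¹ := by
        refine Finset.sum_congr rfl fun m hm => ?_
        rw [Finset.mem_filter, Finset.mem_Icc] at hm
        have := tauk_mul_eq_sum Kp m 1 (by omega)
        simp only [pow_one] at this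
        rw [← this]


/-! ### small analytic lemmas -/

lemma sum_inv_sq_le (N : ℕ) : ∑ n ∈ Finset.Icc 1 N, ((n : ℝ)⁻¹ ^ 2) ≤ 2 - (N : ℝ)⁻¹ := by
  induction N with
  | zero => simp
  | succ N ih =>
    rw [Finset.sum_Icc_succ_top (by omega)]
    rcases Nat.eq_zero_or_pos N with rfl | hN
    · norm_num
    have hN0 : (0 : ℝ) < N := by exact_mod_cast hN
    have key : ((N : ℝ) + 1)⁻¹ ^ 2 ≤ (N : ℝ)⁻¹ - ((N : ℝ) + 1)⁻¹ := by
      have e1 : (N : ℝ)⁻¹ - ((N : ℝ) + 1)⁻¹ = ((N : ℝ) * ((N : ℝ) + 1))⁻¹ := by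
        rw [mul_inv]
        field_simp
        ring
      have e2 : ((((N : ℝ) + 1)) ^ 2)⁻¹ ≤ ((N : ℝ) * ((N : ℝ) + 1))⁻¹ := by
        apply inv_anti₀ (by positivity)
        nlinarith
      rw [inv_pow, e1]
      exact e2
    push_cast
    linarith [ih, key]

lemma odd_half (N : ℕ) :
    (1 / 2 : ℝ) * ∑ n ∈ Finset.Icc 1 N, ((n : ℝ))⁻¹
      ≤ ∑ n ∈ (Finset.Icc 1 N).filter (fun n => Odd n), ((n : ℝ))⁻¹ := by
  have hsplit := Finset.sum_filter_add_sum_filter_not (Finset.Icc 1 N) (fun n => Odd n)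
    (fun n => ((n : ℝ))⁻¹)
  have heven : ∑ n ∈ (Finset.Icc 1 N).filter (fun n => ¬ Odd n), ((n : ℝ))⁻¹
      ≤ ∑ n ∈ (Finset.Icc 1 N).filter (fun n => Odd n), ((n : ℝ))⁻¹ := by
    have h1 : ∑ n ∈ (Finset.Icc 1 N).filter (fun n => ¬ Odd n), ((n : ℝ))⁻¹
        ≤ ∑ n ∈ (Finset.Icc 1 N).filter (fun n => ¬ Odd n), (((n - 1 : ℕ) : ℝ))⁻¹ := by
      apply Finset.sum_le_sum
      intro n hn
      rw [Finset.mem_filter, Finset.mem_Icc] at hn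
      have h2 : 2 ≤ n := by
        rcases Nat.even_or_odd n with he | ho
        · rcases he with ⟨c, rfl⟩
          omega
        · exact absurd ho hn.2
      apply inv_anti₀
      · exact_mod_cast (show 0 < n - 1 by omega)
      · exact_mod_cast Nat.sub_le n 1
    have hinj : ∀ x ∈ (Finset.Icc 1 N).filter (fun n => ¬ Odd n),
        ∀ y ∈ (Finset.Icc 1 N).filter (fun n => ¬ Odd n), x - 1 = y - 1 → x = y := by
      intro a ha b hb hab
      rw [Finset.mem_filter, Finset.mem_Icc] at ha hb
      omega
    have h2 := Finset.sum_image (f := fun m : ℕ => ((m : ℝ))⁻¹)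
      (g := fun n : ℕ => n - 1) hinj
    have h3 : ((Finset.Icc 1 N).filter (fun n => ¬ Odd n)).image (fun n => n - 1)
        ⊆ (Finset.Icc 1 N).filter (fun n => Odd n) := by
      intro m hm
      rw [Finset.mem_image] at hm
      obtain ⟨n, hn, rfl⟩ := hm
      rw [Finset.mem_filter, Finset.mem_Icc] at hn ⊢
      have hev : Even n := Nat.not_odd_iff_even.mp hn.2
      obtain ⟨c, rfl⟩ := hev
      refine ⟨by omega, ⟨c - 1, by omega⟩⟩
    calc ∑ n ∈ (Finset.Icc 1 N).filter (fun n => ¬ Odd n), ((n : ℝ))⁻¹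
        ≤ ∑ n ∈ (Finset.Icc 1 N).filter (fun n => ¬ Odd n), (((n - 1 : ℕ) : ℝ))⁻¹ := h1
      _ = ∑ m ∈ ((Finset.Icc 1 N).filter (fun n => ¬ Odd n)).image (fun n : ℕ => n - 1),
            (Nat.cast m : ℝ)⁻¹ := by simpa using h2.symm
      _ ≤ ∑ n ∈ (Finset.Icc 1 N).filter (fun n => Odd n), ((n : ℝ))⁻¹ := by
          apply Finset.sum_le_sum_of_subset_of_nonneg h3
          intro m _ _
          positivity
  linarith

lemma odd_of_dvd_odd {a m : ℕ} (h : a ∣ m) (hm : Odd m) : Odd a := by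
  rcases Nat.even_or_odd a with he | ho
  · exfalso
    have : (2 : ℕ) ∣ m := dvd_trans he.two_dvd h
    rw [Nat.odd_iff] at hm
    omega
  · exact ho

lemma sum_conv (K N : ℕ) (hK : 1 ≤ K) :
    ∑ m ∈ (Finset.Icc 1 N).filter (fun m => Odd m), (tauk K m : ℝ) * (m : ℝ)⁻¹
      ≤ (∑ a ∈ (Finset.Icc 1 N).filter (fun a => Odd a), (gfun K a : ℝ) * (a : ℝ)⁻¹)
        * (∑ b ∈ Finset.Icc 1 N, (hfun K b : ℝ) * (b : ℝ)⁻¹) := by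
  have step1 : ∀ m ∈ (Finset.Icc 1 N).filter (fun m => Odd m),
      (tauk K m : ℝ) * (m : ℝ)⁻¹ ≤ ∑ x ∈ m.divisorsAntidiagonal,
        ((gfun K x.1 : ℝ) * (x.1 : ℝ)⁻¹) * ((hfun K x.2 : ℝ) * (x.2 : ℝ)⁻¹) := by
    intro m hm
    rw [Finset.mem_filter, Finset.mem_Icc] at hm
    have hm0 : m ≠ 0 := by omega
    have hpt : tauk K m ≤ ∑ x ∈ m.divisorsAntidiagonal, gfun K x.1 * hfun K x.2 := by
      rw [← zeta_pow_apply K hm0, ← ArithmeticFunction.mul_apply]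
      exact pointwise_conv hK hm0
    calc (tauk K m : ℝ) * (m : ℝ)⁻¹
        ≤ ((∑ x ∈ m.divisorsAntidiagonal, gfun K x.1 * hfun K x.2 : ℕ) : ℝ) * (m : ℝ)⁻¹ := by
          apply mul_le_mul_of_nonneg_right _ (by positivity)
          exact_mod_cast hpt
      _ = ∑ x ∈ m.divisorsAntidiagonal,
            ((gfun K x.1 : ℝ) * (x.1 : ℝ)⁻¹) * ((hfun K x.2 : ℝ) * (x.2 : ℝ)⁻¹) := by
          push_cast
          rw [Finset.sum_mul]
          refine Finset.sum_congr rfl fun x hx => ?_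
          rw [Nat.mem_divisorsAntidiagonal] at hx
          have hx1 : x.1 ≠ 0 := by rintro h; rw [h, zero_mul] at hx; exact hm0 hx.1.symm
          have hx2 : x.2 ≠ 0 := by rintro h; rw [h, mul_zero] at hx; exact hm0 hx.1.symm
          rw [← hx.1]
          push_cast
          rw [mul_inv]
          ring
  have hdisj : (↑((Finset.Icc 1 N).filter (fun m => Odd m)) : Set ℕ).PairwiseDisjoint
      (fun m => m.divisorsAntidiagonal) := by
    intro a ha b hb hab
    rw [Function.onFun, Finset.disjoint_left]
    intro x hxa hxb
    rw [Nat.mem_divisorsAntidiagonal] at hxa hxb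
    exact hab (hxa.1.symm.trans hxb.1)
  have hsub : ((Finset.Icc 1 N).filter (fun m => Odd m)).biUnion (fun m => m.divisorsAntidiagonal)
      ⊆ ((Finset.Icc 1 N).filter (fun a => Odd a)) ×ˢ (Finset.Icc 1 N) := by
    intro x hx
    rw [Finset.mem_biUnion] at hx
    obtain ⟨m, hm, hxm⟩ := hx
    rw [Finset.mem_filter, Finset.mem_Icc] at hm
    rw [Nat.mem_divisorsAntidiagonal] at hxm
    have hdvd1 : x.1 ∣ m := ⟨x.2, hxm.1.symm⟩
    have hdvd2 : x.2 ∣ m := ⟨x.1, by rw [← hxm.1, mul_comm]⟩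
    have hx1 : 1 ≤ x.1 := Nat.pos_of_dvd_of_pos hdvd1 (by omega)
    have hx2 : 1 ≤ x.2 := Nat.pos_of_dvd_of_pos hdvd2 (by omega)
    rw [Finset.mem_product, Finset.mem_filter, Finset.mem_Icc, Finset.mem_Icc]
    refine ⟨⟨⟨hx1, le_trans (Nat.le_of_dvd (by omega) hdvd1) hm.1.2⟩,
      odd_of_dvd_odd hdvd1 hm.2⟩, hx2, le_trans (Nat.le_of_dvd (by omega) hdvd2) hm.1.2⟩
  calc ∑ m ∈ (Finset.Icc 1 N).filter (fun m => Odd m), (tauk K m : ℝ) * (m : ℝ)⁻¹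
      ≤ ∑ m ∈ (Finset.Icc 1 N).filter (fun m => Odd m), ∑ x ∈ m.divisorsAntidiagonal,
          ((gfun K x.1 : ℝ) * (x.1 : ℝ)⁻¹) * ((hfun K x.2 : ℝ) * (x.2 : ℝ)⁻¹) :=
        Finset.sum_le_sum step1
    _ = ∑ x ∈ ((Finset.Icc 1 N).filter (fun m => Odd m)).biUnion
          (fun m => m.divisorsAntidiagonal),
          ((gfun K x.1 : ℝ) * (x.1 : ℝ)⁻¹) * ((hfun K x.2 : ℝ) * (x.2 : ℝ)⁻¹) :=
        (Finset.sum_biUnion hdisj).symm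
    _ ≤ ∑ x ∈ ((Finset.Icc 1 N).filter (fun a => Odd a)) ×ˢ (Finset.Icc 1 N),
          ((gfun K x.1 : ℝ) * (x.1 : ℝ)⁻¹) * ((hfun K x.2 : ℝ) * (x.2 : ℝ)⁻¹) := by
        apply Finset.sum_le_sum_of_subset_of_nonneg hsub
        intro x _ _
        positivity
    _ = _ := by
        rw [Finset.sum_mul_sum]
        rw [Finset.sum_product]

lemma sum_hfun_le (K N : ℕ) (hK : 1 ≤ K) :
    ∑ b ∈ Finset.Icc 1 N, (hfun K b : ℝ) * (b : ℝ)⁻¹ ≤ 2 ^ (K ^ 2) := by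
  have h1 : ∑ b ∈ Finset.Icc 1 N, (hfun K b : ℝ) * (b : ℝ)⁻¹
      = ∑ b ∈ (Finset.Icc 1 N).filter (fun b => IsSquare b), (hfun K b : ℝ) * (b : ℝ)⁻¹ := by
    rw [Finset.sum_filter_of_ne]
    intro b _ hne
    by_contra hsq
    apply hne
    rw [hfun_apply, if_neg hsq]
    simp
  have h2 : (Finset.Icc 1 N).filter (fun b => IsSquare b)
      ⊆ (Finset.Icc 1 N).image (fun s => s ^ 2) := by
    intro b hb
    rw [Finset.mem_filter, Finset.mem_Icc] at hb
    obtain ⟨⟨hb1, hb2⟩, r, hr⟩ := hb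
    rw [Finset.mem_image]
    refine ⟨r, ?_, by rw [hr, sq]⟩
    rw [Finset.mem_Icc]
    have hr1 : 1 ≤ r := by
      rcases Nat.eq_zero_or_pos r with rfl | h
      · omega
      · exact h
    exact ⟨hr1, le_trans (Nat.le_mul_of_pos_left r hr1) (by omega)⟩
  have h3 : ∑ b ∈ (Finset.Icc 1 N).filter (fun b => IsSquare b), (hfun K b : ℝ) * (b : ℝ)⁻¹
      ≤ ∑ b ∈ (Finset.Icc 1 N).image (fun s => s ^ 2), (hfun K b : ℝ) * (b : ℝ)⁻¹ := by
    apply Finset.sum_le_sum_of_subset_of_nonneg h2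
    intro b _ _
    positivity
  have h4 : ∑ b ∈ (Finset.Icc 1 N).image (fun s => s ^ 2), (hfun K b : ℝ) * (b : ℝ)⁻¹
      = ∑ s ∈ Finset.Icc 1 N, (hfun K (s ^ 2) : ℝ) * ((s ^ 2 : ℕ) : ℝ)⁻¹ := by
    rw [Finset.sum_image]
    intro a _ b _ hab
    exact Nat.pow_left_injective (by omega) hab
  have h5 : ∑ s ∈ Finset.Icc 1 N, (hfun K (s ^ 2) : ℝ) * ((s ^ 2 : ℕ) : ℝ)⁻¹
      ≤ ∑ s ∈ Finset.Icc 1 N, (tauk (K ^ 2) s : ℝ) * ((s : ℝ)⁻¹ ^ 2) := by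
    apply Finset.sum_le_sum
    intro s hs
    rw [Finset.mem_Icc] at hs
    have hs0 : s ≠ 0 := by omega
    have hterm : hfun K (s ^ 2) ≤ tauk (K ^ 2) s := by
      rw [hfun_apply, if_pos ⟨s, sq s ▸ rfl⟩]
      calc ((ζ : ArithmeticFunction ℕ) ^ K) (s ^ 2)
          ≤ (((ζ : ArithmeticFunction ℕ) ^ K) s) ^ 2 := pointwise_T2 hK hs0
        _ ≤ ((ζ : ArithmeticFunction ℕ) ^ (K ^ 2)) s := pointwise_sq hK hs0
        _ = tauk (K ^ 2) s := zeta_pow_apply _ hs0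
    have hcast : ((s ^ 2 : ℕ) : ℝ)⁻¹ = (s : ℝ)⁻¹ ^ 2 := by
      push_cast
      rw [inv_pow]
    rw [hcast]
    apply mul_le_mul_of_nonneg_right _ (by positivity)
    exact_mod_cast hterm
  have h6 : ∑ s ∈ Finset.Icc 1 N, (tauk (K ^ 2) s : ℝ) * ((s : ℝ)⁻¹ ^ 2)
      ≤ (∑ n ∈ Finset.Icc 1 N, ((n : ℝ)⁻¹ ^ 2)) ^ (K ^ 2) := sum_tauk_le (K ^ 2) N 2
  have h7 : (∑ n ∈ Finset.Icc 1 N, ((n : ℝ)⁻¹ ^ 2)) ^ (K ^ 2) ≤ 2 ^ (K ^ 2) := by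
    apply pow_le_pow_left₀ (by positivity)
    have := sum_inv_sq_le N
    have hN0 : (0:ℝ) ≤ (N:ℝ)⁻¹ := by positivity
    linarith
  calc _ = _ := h1
    _ ≤ _ := h3
    _ = _ := h4
    _ ≤ _ := h5
    _ ≤ _ := h6
    _ ≤ _ := h7



/-- for every `k ≥ 1` there are constants `c1, c2 > 0` such that for all
`x ≥ 2`:
`c1 (log x)^{k²} ≤ Σ_{m ≤ x, m odd} τ_k(m)²/m ≤ Σ_{m ≤ x} τ_k(m)²/m ≤ c2 (log x)^{k²}`. -/
theorem tauk_squared_partial_sums (k : ℕ) (hk : 1 ≤ k) :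
    ∃ c1 > (0 : ℝ), ∃ c2 > (0 : ℝ), ∀ x : ℝ, 2 ≤ x →
      c1 * (Real.log x) ^ (k ^ 2) ≤
          ∑ m ∈ Finset.Icc 1 ⌊x⌋₊, (if Odd m then (tauk k m : ℝ) ^ 2 / m else 0) ∧
      ∑ m ∈ Finset.Icc 1 ⌊x⌋₊, (if Odd m then (tauk k m : ℝ) ^ 2 / m else 0) ≤
          ∑ m ∈ Finset.Icc 1 ⌊x⌋₊, (tauk k m : ℝ) ^ 2 / m ∧
      ∑ m ∈ Finset.Icc 1 ⌊x⌋₊, (tauk k m : ℝ) ^ 2 / m ≤ c2 * (Real.log x) ^ (k ^ 2) := by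
  have hK : 1 ≤ k ^ 2 := Nat.one_le_pow _ _ hk
  have hKpos : (0 : ℝ) < ((k ^ 2 : ℕ) : ℝ) := by exact_mod_cast hK
  have h2K : (0 : ℝ) < 2 * ((k ^ 2 : ℕ) : ℝ) := by linarith
  have hlog2 : 0 < Real.log 2 := Real.log_pos (by norm_num)
  refine ⟨(1 / (2 * ((k ^ 2 : ℕ) : ℝ))) ^ (k ^ 2) * ((2 : ℝ) ^ ((k ^ 2) ^ 2))⁻¹,
    mul_pos (pow_pos (by positivity) _) (inv_pos.mpr (by positivity)),
    (1 + 1 / Real.log 2) ^ (k ^ 2), by positivity, ?_⟩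
  intro x hx
  have hx0 : (0 : ℝ) < x := by linarith
  have hx1 : (1 : ℝ) ≤ x := by linarith
  have hN1 : 1 ≤ ⌊x⌋₊ := Nat.le_floor (by exact_mod_cast hx1)
  have hlogx2 : Real.log 2 ≤ Real.log x := Real.log_le_log (by norm_num) hx
  have hlogx : 0 < Real.log x := lt_of_lt_of_le hlog2 hlogx2
  -- middle inequality
  have hmid : ∑ m ∈ Finset.Icc 1 ⌊x⌋₊, (if Odd m then (tauk k m : ℝ) ^ 2 / m else 0)
      ≤ ∑ m ∈ Finset.Icc 1 ⌊x⌋₊, (tauk k m : ℝ) ^ 2 / m := by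
    apply Finset.sum_le_sum
    intro m _
    split
    · exact le_rfl
    · positivity
  -- upper bound
  have hupper : ∑ m ∈ Finset.Icc 1 ⌊x⌋₊, (tauk k m : ℝ) ^ 2 / m
      ≤ (1 + 1 / Real.log 2) ^ (k ^ 2) * Real.log x ^ (k ^ 2) := by
    have e1 : ∑ m ∈ Finset.Icc 1 ⌊x⌋₊, (tauk k m : ℝ) ^ 2 / m
        ≤ ∑ m ∈ Finset.Icc 1 ⌊x⌋₊, (tauk (k ^ 2) m : ℝ) * (m : ℝ)⁻¹ := by
      apply Finset.sum_le_sum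
      intro m hm
      rw [Finset.mem_Icc] at hm
      have hm0 : m ≠ 0 := by omega
      rw [div_eq_mul_inv]
      apply mul_le_mul_of_nonneg_right _ (by positivity)
      have hpt : (tauk k m) ^ 2 ≤ tauk (k ^ 2) m := by
        rw [← zeta_pow_apply k hm0, ← zeta_pow_apply (k ^ 2) hm0]
        exact pointwise_sq hk hm0
      exact_mod_cast hpt
    have e2 := sum_tauk_le (k ^ 2) ⌊x⌋₊ 1
    simp only [pow_one] at e2
    have e3 : ∑ n ∈ Finset.Icc 1 ⌊x⌋₊, ((n : ℝ))⁻¹ ≤ (1 + 1 / Real.log 2) * Real.log x := by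
      have h5 : ∑ n ∈ Finset.Icc 1 ⌊x⌋₊, ((n : ℝ))⁻¹ = ((harmonic ⌊x⌋₊ : ℚ) : ℝ) := by
        rw [harmonic_eq_sum_Icc]
        push_cast
        rfl
      have h6 : Real.log ⌊x⌋₊ ≤ Real.log x :=
        Real.log_le_log (by exact_mod_cast hN1) (Nat.floor_le hx0.le)
      have h7 : 1 ≤ Real.log x / Real.log 2 := (one_le_div hlog2).mpr hlogx2
      have h4 := harmonic_le_one_add_log ⌊x⌋₊
      rw [h5]
      have h8 : Real.log x / Real.log 2 = (1 / Real.log 2) * Real.log x := by ring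
      nlinarith [h4, h6, h7, hlogx]
    calc ∑ m ∈ Finset.Icc 1 ⌊x⌋₊, (tauk k m : ℝ) ^ 2 / m
        ≤ (∑ n ∈ Finset.Icc 1 ⌊x⌋₊, ((n : ℝ))⁻¹) ^ (k ^ 2) := e1.trans e2
      _ ≤ ((1 + 1 / Real.log 2) * Real.log x) ^ (k ^ 2) := by
          apply pow_le_pow_left₀ (by positivity) e3
      _ = (1 + 1 / Real.log 2) ^ (k ^ 2) * Real.log x ^ (k ^ 2) := mul_pow _ _ _
  -- lower bound
  have hlower : (1 / (2 * ((k ^ 2 : ℕ) : ℝ))) ^ (k ^ 2) * ((2 : ℝ) ^ ((k ^ 2) ^ 2))⁻¹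
        * Real.log x ^ (k ^ 2)
      ≤ ∑ m ∈ Finset.Icc 1 ⌊x⌋₊, (if Odd m then (tauk k m : ℝ) ^ 2 / m else 0) := by
    set y : ℝ := x ^ (((k ^ 2 : ℕ) : ℝ))⁻¹ with hy
    have hy0 : (0 : ℝ) < y := Real.rpow_pos_of_pos hx0 _
    have hy1 : 1 ≤ y := Real.one_le_rpow hx1 (by positivity)
    have hN'1 : 1 ≤ ⌊y⌋₊ := Nat.le_floor (by exact_mod_cast hy1)
    have hKne : ((k ^ 2 : ℕ) : ℝ) ≠ 0 := ne_of_gt hKpos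
    have hyK : y ^ (k ^ 2) = x := by
      rw [hy, ← Real.rpow_natCast (x ^ (((k ^ 2 : ℕ) : ℝ))⁻¹) (k ^ 2), ← Real.rpow_mul hx0.le]
      rw [show ((((k ^ 2 : ℕ)) : ℝ))⁻¹ * ((k ^ 2 : ℕ) : ℝ) = 1 from inv_mul_cancel₀ hKne,
        Real.rpow_one]
    have hNN' : ⌊y⌋₊ ^ (k ^ 2) ≤ ⌊x⌋₊ := by
      apply Nat.le_floor
      push_cast
      calc ((⌊y⌋₊ : ℝ)) ^ (k ^ 2) ≤ y ^ (k ^ 2) :=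
            pow_le_pow_left₀ (by positivity) (Nat.floor_le hy0.le) _
        _ = x := hyK
    have hlogy : Real.log y = (((k ^ 2 : ℕ) : ℝ))⁻¹ * Real.log x := Real.log_rpow hx0 _
    have hhalfsum : Real.log x / (2 * ((k ^ 2 : ℕ) : ℝ))
        ≤ ∑ n ∈ (Finset.Icc 1 ⌊y⌋₊).filter (fun n => Odd n), ((n : ℝ))⁻¹ := by
      have h1 : Real.log y ≤ ((harmonic ⌊y⌋₊ : ℚ) : ℝ) := log_le_harmonic_floor y hy0.le
      have h2 : ((harmonic ⌊y⌋₊ : ℚ) : ℝ) = ∑ n ∈ Finset.Icc 1 ⌊y⌋₊, ((n : ℝ))⁻¹ := by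
        rw [harmonic_eq_sum_Icc]
        push_cast
        rfl
      have h3 := odd_half ⌊y⌋₊
      rw [h2, hlogy] at h1
      calc Real.log x / (2 * ((k ^ 2 : ℕ) : ℝ))
          = (1 / 2 : ℝ) * ((((k ^ 2 : ℕ) : ℝ))⁻¹ * Real.log x) := by
            field_simp
        _ ≤ (1 / 2 : ℝ) * ∑ n ∈ Finset.Icc 1 ⌊y⌋₊, ((n : ℝ))⁻¹ := by linarith
        _ ≤ _ := h3
    have hD := sum_tauk_ge (k ^ 2) ⌊x⌋₊ ⌊y⌋₊ hN'1 hNN'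
    have hconv := sum_conv (k ^ 2) ⌊x⌋₊ hK
    have hhsum := sum_hfun_le (k ^ 2) ⌊x⌋₊ hK
    have hg0 : (0 : ℝ) ≤ ∑ a ∈ (Finset.Icc 1 ⌊x⌋₊).filter (fun a => Odd a),
        (gfun (k ^ 2) a : ℝ) * (a : ℝ)⁻¹ := by positivity
    have hchain : (Real.log x / (2 * ((k ^ 2 : ℕ) : ℝ))) ^ (k ^ 2)
        ≤ (∑ a ∈ (Finset.Icc 1 ⌊x⌋₊).filter (fun a => Odd a),
            (gfun (k ^ 2) a : ℝ) * (a : ℝ)⁻¹) * 2 ^ ((k ^ 2) ^ 2) := by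
      calc (Real.log x / (2 * ((k ^ 2 : ℕ) : ℝ))) ^ (k ^ 2)
          ≤ (∑ n ∈ (Finset.Icc 1 ⌊y⌋₊).filter (fun n => Odd n), ((n : ℝ))⁻¹) ^ (k ^ 2) := by
            apply pow_le_pow_left₀ (by positivity) hhalfsum
        _ ≤ ∑ m ∈ (Finset.Icc 1 ⌊x⌋₊).filter (fun m => Odd m), (tauk (k ^ 2) m : ℝ) * (m : ℝ)⁻¹ :=
            hD
        _ ≤ (∑ a ∈ (Finset.Icc 1 ⌊x⌋₊).filter (fun a => Odd a),
              (gfun (k ^ 2) a : ℝ) * (a : ℝ)⁻¹)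
            * (∑ b ∈ Finset.Icc 1 ⌊x⌋₊, (hfun (k ^ 2) b : ℝ) * (b : ℝ)⁻¹) := hconv
        _ ≤ _ := mul_le_mul_of_nonneg_left hhsum hg0
    have hgle : ∑ a ∈ (Finset.Icc 1 ⌊x⌋₊).filter (fun a => Odd a),
          (gfun (k ^ 2) a : ℝ) * (a : ℝ)⁻¹
        ≤ ∑ m ∈ Finset.Icc 1 ⌊x⌋₊, (if Odd m then (tauk k m : ℝ) ^ 2 / m else 0) := by
      rw [← Finset.sum_filter]
      apply Finset.sum_le_sum
      intro a ha
      rw [Finset.mem_filter, Finset.mem_Icc] at ha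
      have ha0 : a ≠ 0 := by omega
      rw [div_eq_mul_inv]
      apply mul_le_mul_of_nonneg_right _ (by positivity)
      have hga : gfun (k ^ 2) a ≤ (tauk k a) ^ 2 := by
        rw [← zeta_pow_apply k ha0]
        exact pointwise_g hk ha0
      exact_mod_cast hga
    calc (1 / (2 * ((k ^ 2 : ℕ) : ℝ))) ^ (k ^ 2) * ((2 : ℝ) ^ ((k ^ 2) ^ 2))⁻¹
          * Real.log x ^ (k ^ 2)
        = (Real.log x / (2 * ((k ^ 2 : ℕ) : ℝ))) ^ (k ^ 2) * ((2 : ℝ) ^ ((k ^ 2) ^ 2))⁻¹ := by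
          rw [div_pow, div_pow, one_pow]
          ring
      _ ≤ ((∑ a ∈ (Finset.Icc 1 ⌊x⌋₊).filter (fun a => Odd a),
            (gfun (k ^ 2) a : ℝ) * (a : ℝ)⁻¹) * 2 ^ ((k ^ 2) ^ 2))
            * ((2 : ℝ) ^ ((k ^ 2) ^ 2))⁻¹ :=
          mul_le_mul_of_nonneg_right hchain (by positivity)
      _ = ∑ a ∈ (Finset.Icc 1 ⌊x⌋₊).filter (fun a => Odd a),
            (gfun (k ^ 2) a : ℝ) * (a : ℝ)⁻¹ := by
          field_simp
      _ ≤ _ := hgle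
  exact ⟨hlower, hmid, hupper⟩
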